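/- arXiv:2406.01200 — 2 statements merged into one kernel-verified Lean document; each statement's English description precedes it below -/
import Mathlib

section
/- (Binomial identity) For every integer $n \ge 0$ and all real numbers $x,y$, $B_n^{(L,Y)}(x+y) = \sum_{k=0}^{n}\binom{n}{k} B_k^{(L,Y)}(x) B_{n-k}^{(L,Y)}(y)$. -/
open MeasureTheory ProbabilityTheory Finset

/-- The rising factorial `⟨x⟩_n = x (x+1) ⋯ (x+n-1)`, with `⟨x⟩_0 = 1`. -/
noncomputable def asc (x : ℝ) : ℕ → ℝ
  | 0 => 1
  | n + 1 => asc x n * (x + n)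

/-- The probabilistic Lah numbers associated with the random variable `Y`, defined from
the iid copies `Ys` of `Y` via `L_Y(n,k) = (1/k!) ∑_{l=0}^k C(k,l) (-1)^{k-l} E[⟨S_l⟩_n]`,
where `S_l = Y_1 + ⋯ + Y_l`. -/
noncomputable def probLah {Ω : Type*} [MeasurableSpace Ω] (μ : Measure Ω)
    (Ys : ℕ → Ω → ℝ) (n k : ℕ) : ℝ :=
  (k.factorial : ℝ)⁻¹ * ∑ l ∈ Finset.range (k + 1),
    (k.choose l : ℝ) * (-1) ^ (k - l) * ∫ ω, asc (∑ j ∈ Finset.range l, Ys j ω) n ∂μ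

/-- The probabilistic Lah-Bell polynomials `B_n^{(L,Y)}(x) = ∑_{k=0}^n L_Y(n,k) x^k`. -/
noncomputable def probLahBell {Ω : Type*} [MeasurableSpace Ω] (μ : Measure Ω)
    (Ys : ℕ → Ω → ℝ) (n : ℕ) (x : ℝ) : ℝ :=
  ∑ k ∈ Finset.range (n + 1), probLah μ Ys n k * x ^ k

/-! ### Auxiliary lemmas about the rising factorial -/

lemma asc_succ (x : ℝ) (n : ℕ) : asc x (n + 1) = asc x n * (x + n) := rfl
lemma asc_nil (x : ℝ) : asc x 0 = 1 := rfl

lemma asc_zero (n : ℕ) : asc 0 n = if n = 0 then 1 else 0 := by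
  induction n with
  | zero => simp [asc]
  | succ n ih =>
    rcases n with _ | n
    · simp [asc]
    · rw [asc_succ, ih]; simp

lemma measurable_asc (k : ℕ) : Measurable (fun x : ℝ => asc x k) := by
  induction k with
  | zero => simp only [asc]; exact measurable_const
  | succ k ih => exact ih.mul (measurable_id.add_const _)

lemma asc_eq_eval (x : ℝ) (n : ℕ) : asc x n = (ascPochhammer ℝ n).eval x := by
  induction n with
  | zero => simp [asc]
  | succ n ih => rw [asc_succ, ih, ascPochhammer_succ_right]; simp [mul_add]

lemma asc_eq_sum (x : ℝ) (m : ℕ) :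
    asc x m = ∑ i ∈ range (m + 1), (ascPochhammer ℝ m).coeff i * x ^ i := by
  rw [asc_eq_eval, Polynomial.eval_eq_sum_range' (n := m + 1)
    (Nat.lt_succ_of_le (le_of_eq (ascPochhammer_natDegree ℝ m)))]

/-- Vandermonde identity for rising factorials. -/
lemma asc_add (u v : ℝ) : ∀ n : ℕ, asc (u + v) n
    = ∑ k ∈ range (n + 1), (n.choose k : ℝ) * (asc u k * asc v (n - k))
  | 0 => by simp [asc]
  | n + 1 => by
    rw [asc_succ, asc_add u v n, sum_mul]
    have h1 : ∀ k ∈ range (n + 1),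
        (n.choose k : ℝ) * (asc u k * asc v (n - k)) * (u + v + n)
          = (n.choose k : ℝ) * (asc u (k + 1) * asc v (n - k))
            + (n.choose k : ℝ) * (asc u k * asc v (n - k + 1)) := by
      intro k hk
      have hk' : k ≤ n := by simpa [Nat.lt_succ_iff] using hk
      have hc : ((n - k : ℕ) : ℝ) = (n : ℝ) - k := by
        rw [Nat.cast_sub hk']
      rw [asc_succ, asc_succ, hc]
      ring
    rw [sum_congr rfl h1, sum_add_distrib]
    have e2 : ∑ k ∈ range (n + 1), (n.choose k : ℝ) * (asc u k * asc v (n - k + 1))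
        = ∑ k ∈ range (n + 1), (n.choose k : ℝ) * (asc u k * asc v (n + 1 - k)) := by
      refine sum_congr rfl fun k hk => ?_
      have hk' : k ≤ n := by simpa [Nat.lt_succ_iff] using hk
      rw [Nat.sub_add_comm hk']
    rw [e2]
    rw [sum_range_succ' (fun k => ((n+1).choose k : ℝ) * (asc u k * asc v (n + 1 - k))) (n+1)]
    simp only [Nat.choose_succ_succ, Nat.cast_add, Nat.choose_zero_right, Nat.cast_one,
      Nat.sub_zero, asc_nil, one_mul, Nat.succ_sub_succ]
    rw [show (∑ i ∈ range (n + 1), ((n.choose i : ℝ) + (n.choose (i+1) : ℝ)) *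
        (asc u (i+1) * asc v (n - i))) = (∑ i ∈ range (n + 1),
        (n.choose (i+1) : ℝ) * (asc u (i+1) * asc v (n - i))) + (∑ i ∈ range (n + 1),
        (n.choose i : ℝ) * (asc u (i+1) * asc v (n - i))) by
      rw [← sum_add_distrib]; exact sum_congr rfl fun i hi => by ring]
    rw [sum_range_succ' (fun k => (n.choose k : ℝ) * (asc u k * asc v (n + 1 - k))) n]
    simp only [Nat.sub_zero, asc_nil, one_mul, Nat.choose_zero_right, Nat.cast_one,
      Nat.succ_sub_succ]
    rw [sum_range_succ (fun i => (n.choose (i+1) : ℝ) * (asc u (i+1) * asc v (n - i))) n]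
    simp only [Nat.choose_succ_self, Nat.cast_zero, zero_mul, add_zero, asc_succ]
    ring

/-! ### Integrability lemmas -/

section
variable {Ω : Type*} [MeasurableSpace Ω] (μ : Measure Ω)
  (Y : Ω → ℝ) (hY : Measurable Y) (r : ℝ) (hr : 0 < r)
  (hmgf : ∀ t : ℝ, |t| < r → Integrable (fun ω => Real.exp (t * Y ω)) μ)

include hY hr hmgf in
lemma integrable_pow_mgf (i : ℕ) : Integrable (fun ω => Y ω ^ i) μ := by
  set t := r / 2 with ht
  have ht0 : 0 < t := by positivity
  have htr : |t| < r := by rw [abs_of_pos ht0]; linarith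
  have htr' : |(-t)| < r := by rwa [abs_neg]
  have h1 := hmgf t htr
  have h2 := hmgf (-t) htr'
  have hg : Integrable (fun ω => (i.factorial : ℝ) / t ^ i *
      (Real.exp (t * Y ω) + Real.exp (-t * Y ω))) μ := (h1.add h2).const_mul _
  refine hg.mono' ((hY.pow_const i).aestronglyMeasurable) ?_
  refine Filter.Eventually.of_forall fun ω => ?_
  have key : |Y ω| ^ i ≤ (i.factorial : ℝ) / t ^ i * Real.exp (t * |Y ω|) := by
    have := Real.pow_div_factorial_le_exp (x := t * |Y ω|) (by positivity) i
    rw [mul_pow] at this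
    rw [div_mul_eq_mul_div, le_div_iff₀ (by positivity)]
    rw [div_le_iff₀ (by positivity : (0:ℝ) < (i.factorial : ℝ))] at this
    calc |Y ω| ^ i * t ^ i = t ^ i * |Y ω| ^ i := by ring
    _ ≤ Real.exp (t * |Y ω|) * i.factorial := this
    _ = (i.factorial : ℝ) * Real.exp (t * |Y ω|) := by ring
  have key2 : Real.exp (t * |Y ω|) ≤ Real.exp (t * Y ω) + Real.exp (-t * Y ω) := by
    rcases abs_cases (Y ω) with ⟨h, _⟩ | ⟨h, _⟩
    · rw [h]; nlinarith [Real.exp_pos (-t * Y ω)]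
    · rw [h, show t * -Y ω = -t * Y ω by ring]; nlinarith [Real.exp_pos (t * Y ω)]
  calc ‖Y ω ^ i‖ = |Y ω| ^ i := by rw [Real.norm_eq_abs, abs_pow]
  _ ≤ (i.factorial : ℝ) / t ^ i * Real.exp (t * |Y ω|) := key
  _ ≤ (i.factorial : ℝ) / t ^ i * (Real.exp (t * Y ω) + Real.exp (-t * Y ω)) := by
      apply mul_le_mul_of_nonneg_left key2 (by positivity)

include hY hr hmgf in
lemma integrable_asc_mgf (m : ℕ) : Integrable (fun ω => asc (Y ω) m) μ := by
  have : (fun ω => asc (Y ω) m)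
      = fun ω => ∑ i ∈ range (m + 1), (ascPochhammer ℝ m).coeff i * Y ω ^ i := by
    funext ω; exact asc_eq_sum _ _
  rw [this]
  exact integrable_finset_sum _ fun i _ =>
    (integrable_pow_mgf μ Y hY r hr hmgf i).const_mul _

end

/-! ### The moments of partial sums as power series coefficients -/

section
variable {Ω : Type*} [MeasurableSpace Ω] (μ : Measure Ω) [IsProbabilityMeasure μ]
  (Y : Ω → ℝ) (Ys : ℕ → Ω → ℝ)
  (hYs : ∀ j, Measurable (Ys j))
  (hid : ∀ j, IdentDistrib (Ys j) Y μ μ)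
  (hindep : iIndepFun Ys μ)
  (hintY : ∀ m : ℕ, Integrable (fun ω => asc (Y ω) m) μ)

include hYs hid hindep hintY in
lemma key_induction : ∀ l n : ℕ,
    Integrable (fun ω => asc (∑ j ∈ range l, Ys j ω) n) μ ∧
    ∫ ω, asc (∑ j ∈ range l, Ys j ω) n ∂μ = n.factorial *
      PowerSeries.coeff n ((PowerSeries.mk fun m => (∫ ω, asc (Y ω) m ∂μ) / m.factorial) ^ l) := by
  set F : PowerSeries ℝ := PowerSeries.mk fun m => (∫ ω, asc (Y ω) m ∂μ) / m.factorial with hF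
  intro l
  induction l with
  | zero =>
    intro n
    simp only [range_zero, sum_empty, pow_zero]
    constructor
    · exact integrable_const _
    · rw [asc_zero, integral_const, probReal_univ]
      rcases Nat.eq_zero_or_pos n with h | h
      · subst h; simp
      · rw [if_neg h.ne', PowerSeries.coeff_one, if_neg h.ne']
        simp
  | succ l ih =>
    intro n
    have hS : Measurable (fun ω => ∑ j ∈ range l, Ys j ω) :=
      Finset.measurable_sum _ fun j _ => hYs j
    have hIndep0 : IndepFun (∑ j ∈ range l, Ys j) (Ys l) μ :=
      hindep.indepFun_finsetSum_of_notMem hYs Finset.notMem_range_self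
    have hIndep : IndepFun (fun ω => ∑ j ∈ range l, Ys j ω) (Ys l) μ := by
      have : (∑ j ∈ range l, Ys j) = fun ω => ∑ j ∈ range l, Ys j ω := by
        funext ω; simp [Finset.sum_apply]
      rwa [this] at hIndep0
    have hidl : ∀ m : ℕ, IdentDistrib (fun ω => asc (Ys l ω) m) (fun ω => asc (Y ω) m) μ μ :=
      fun m => (hid l).comp (measurable_asc m)
    have hintYs : ∀ m : ℕ, Integrable (fun ω => asc (Ys l ω) m) μ :=
      fun m => ((hidl m).integrable_iff).mpr (hintY m)
    have haYs : ∀ m : ℕ, ∫ ω, asc (Ys l ω) m ∂μ = ∫ ω, asc (Y ω) m ∂μ :=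
      fun m => (hidl m).integral_eq
    have hfun : (fun ω => asc (∑ j ∈ range (l+1), Ys j ω) n)
        = fun ω => ∑ k ∈ range (n+1), (n.choose k : ℝ) *
            (asc (∑ j ∈ range l, Ys j ω) k * asc (Ys l ω) (n - k)) := by
      funext ω
      rw [Finset.sum_range_succ, asc_add]
    have hIndepk : ∀ k m : ℕ, IndepFun (fun ω => asc (∑ j ∈ range l, Ys j ω) k)
        (fun ω => asc (Ys l ω) m) μ :=
      fun k m => hIndep.comp (measurable_asc k) (measurable_asc m)
    have hint2 : ∀ k m : ℕ, Integrable
        (fun ω => asc (∑ j ∈ range l, Ys j ω) k * asc (Ys l ω) m) μ := fun k m =>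
      (hIndepk k m).integrable_mul (ih k).1 (hintYs m)
    constructor
    · rw [hfun]
      exact integrable_finset_sum _ fun k _ => ((hint2 k (n-k)).const_mul _)
    · rw [hfun, integral_finset_sum _ fun k _ => ((hint2 k (n-k)).const_mul _)]
      have hmul : ∀ k m : ℕ, ∫ ω, asc (∑ j ∈ range l, Ys j ω) k * asc (Ys l ω) m ∂μ
          = (k.factorial * PowerSeries.coeff k (F ^ l)) * (∫ ω, asc (Y ω) m ∂μ) := by
        intro k m
        have h2 : ∫ ω, asc (∑ j ∈ range l, Ys j ω) k * asc (Ys l ω) m ∂μ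
            = (∫ ω, asc (∑ j ∈ range l, Ys j ω) k ∂μ) * ∫ ω, asc (Ys l ω) m ∂μ :=
          (hIndepk k m).integral_fun_mul_eq_mul_integral (ih k).1.aestronglyMeasurable
            (hintYs m).aestronglyMeasurable
        rw [h2, (ih k).2, haYs m]
      simp_rw [integral_const_mul, hmul]
      rw [pow_succ, PowerSeries.coeff_mul]
      rw [Finset.Nat.sum_antidiagonal_eq_sum_range_succ
        (f := fun a b => PowerSeries.coeff a (F ^ l) * PowerSeries.coeff b F)]
      rw [Finset.mul_sum]
      refine Finset.sum_congr rfl fun k hk => ?_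
      have hk' : k ≤ n := by simpa [Nat.lt_succ_iff] using hk
      have hcoeffF : PowerSeries.coeff (n - k) F
          = (∫ ω, asc (Y ω) (n-k) ∂μ) / (n-k).factorial := by
        rw [hF]; simp [PowerSeries.coeff_mk]
      rw [hcoeffF]
      have hne : ((n-k).factorial : ℝ) ≠ 0 := Nat.cast_ne_zero.mpr (Nat.factorial_ne_zero _)
      have hchoose : (n.choose k : ℝ) = (n.factorial : ℝ) / (k.factorial * (n-k).factorial) := by
        rw [eq_div_iff (by positivity)]
        rw [← Nat.cast_mul, ← Nat.cast_mul, ← Nat.choose_mul_factorial_mul_factorial hk']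
        push_cast; ring
      field_simp [hchoose]
      have hc : (n.choose k : ℝ) * k.factorial * (n-k).factorial = n.factorial := by
        exact_mod_cast Nat.choose_mul_factorial_mul_factorial hk'
      linear_combination ((PowerSeries.coeff k) (F ^ l) * ∫ ω, asc (Y ω) (n - k) ∂μ) * hc

end

/-! ### Power series algebra -/

open PowerSeries in
lemma coeff_sub_one_pow (F : PowerSeries ℝ) (n k : ℕ) :
    (PowerSeries.coeff n) ((F - 1) ^ k)
      = ∑ l ∈ range (k + 1), (k.choose l : ℝ) * (-1) ^ (k - l) *
          (PowerSeries.coeff n) (F ^ l) := by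
  rw [sub_pow, map_sum]
  refine Finset.sum_congr rfl fun l hl => ?_
  have hl' : l ≤ k := by simpa [Nat.lt_succ_iff] using hl
  have h1 : ((-1 : ℝ⟦X⟧) ^ (l + k) * F ^ l * 1 ^ (k - l) * (k.choose l : ℝ⟦X⟧))
      = PowerSeries.C ((-1 : ℝ) ^ (l + k) * (k.choose l : ℝ)) * F ^ l := by
    rw [show ((k.choose l : ℝ⟦X⟧)) = PowerSeries.C (k.choose l : ℝ) from
      (map_natCast (PowerSeries.C (R := ℝ)) _).symm, map_mul, map_pow, map_neg, map_one]
    ring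
  rw [h1, PowerSeries.coeff_C_mul]
  have : (-1 : ℝ) ^ (l + k) = (-1) ^ (k - l) := by
    rw [show l + k = (k - l) + 2 * l by omega, pow_add]
    simp [pow_mul]
  rw [this]; ring

open PowerSeries in
lemma coeff_pow_eq_zero_of_lt {G : PowerSeries ℝ} (hG : PowerSeries.constantCoeff G = 0)
    {m k : ℕ} (h : m < k) : PowerSeries.coeff m (G ^ k) = 0 := by
  obtain ⟨H, hH⟩ : (X : ℝ⟦X⟧) ^ k ∣ G ^ k := pow_dvd_pow_of_dvd (X_dvd_iff.mpr hG) k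
  rw [hH, PowerSeries.coeff_X_pow_mul', if_neg (by omega)]

/-! ### A triangle/square summation identity -/

lemma key_sum (n : ℕ) (c : ℕ → ℝ) (hc : ∀ k, n < k → c k = 0) (x y : ℝ) :
    ∑ m ∈ range (n+1), (x+y)^m / m.factorial * c m
      = ∑ i ∈ range (n+1), ∑ j ∈ range (n+1),
          x^i / i.factorial * (y^j / j.factorial) * c (i+j) := by
  rw [← Finset.sum_product' (f := fun i j =>
      x^i / i.factorial * (y^j / j.factorial) * c (i+j))]
  rw [← Finset.sum_filter_of_ne (p := fun p : ℕ×ℕ => p.1 + p.2 ≤ n)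
    (fun p _ h => by by_contra hn; exact h (by rw [hc _ (by omega)]; ring))]
  have hset : (range (n+1) ×ˢ range (n+1)).filter (fun p : ℕ×ℕ => p.1 + p.2 ≤ n)
      = (range (n+1)).biUnion (fun m => Finset.HasAntidiagonal.antidiagonal m) := by
    ext ⟨i, j⟩
    simp only [Finset.mem_filter, Finset.mem_product, Finset.mem_range, Finset.mem_biUnion,
      Finset.HasAntidiagonal.mem_antidiagonal]
    constructor
    · rintro ⟨⟨h1, h2⟩, h3⟩; exact ⟨i + j, by omega, by simp [Finset.HasAntidiagonal.mem_antidiagonal]⟩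
    · rintro ⟨m, hm, hij⟩; omega
  rw [hset, Finset.sum_biUnion (by
    intro a ha b hb hab
    simp only [Finset.disjoint_left]
    rintro ⟨i, j⟩ hij hij'
    rw [Finset.HasAntidiagonal.mem_antidiagonal] at hij hij'
    exact hab (hij ▸ hij'.symm ▸ rfl))]
  refine Finset.sum_congr rfl fun m hm => ?_
  rw [Commute.add_pow' (Commute.all x y) m, Finset.sum_div, Finset.sum_mul]
  refine Finset.sum_congr rfl fun p hp => ?_
  obtain ⟨i, j⟩ := p
  dsimp only
  rw [Finset.HasAntidiagonal.mem_antidiagonal] at hp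
  have hii : i ≤ m := by omega
  have hj : m - i = j := by omega
  have hA : (m.choose i : ℝ) = (m.factorial : ℝ) / (i.factorial * j.factorial) := by
    rw [eq_div_iff (by positivity)]
    have h := Nat.choose_mul_factorial_mul_factorial hii
    rw [hj] at h
    push_cast [← h]
    ring
  have hp' : i + j = m := hp
  simp only [nsmul_eq_mul]
  rw [hp', hA]
  have hm0 : (m.factorial : ℝ) ≠ 0 := Nat.cast_ne_zero.mpr (Nat.factorial_ne_zero _)
  field_simp

theorem statement_7 {Ω : Type*} [MeasurableSpace Ω] (μ : Measure Ω) [IsProbabilityMeasure μ]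
    (Y : Ω → ℝ) (Ys : ℕ → Ω → ℝ)
    (hY : Measurable Y) (hYs : ∀ j, Measurable (Ys j))
    (hid : ∀ j, IdentDistrib (Ys j) Y μ μ)
    (hindep : iIndepFun Ys μ)
    (r : ℝ) (hr : 0 < r)
    (hmgf : ∀ t : ℝ, |t| < r → Integrable (fun ω => Real.exp (t * Y ω)) μ)
    (n : ℕ) (x y : ℝ) :
    probLahBell μ Ys n (x + y) = ∑ k ∈ Finset.range (n + 1),
      (n.choose k : ℝ) * probLahBell μ Ys k x * probLahBell μ Ys (n - k) y := by
  have hintY : ∀ m : ℕ, Integrable (fun ω => asc (Y ω) m) μ :=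
    integrable_asc_mgf μ Y hY r hr hmgf
  set F : PowerSeries ℝ := PowerSeries.mk fun m => (∫ ω, asc (Y ω) m ∂μ) / m.factorial with hF
  have hkey := key_induction μ Y Ys hYs hid hindep hintY
  set G : PowerSeries ℝ := F - 1 with hGdef
  have hG0 : PowerSeries.constantCoeff G = 0 := by
    rw [hGdef, map_sub, map_one, hF]
    have : PowerSeries.constantCoeff (PowerSeries.mk
        fun m => (∫ ω, asc (Y ω) m ∂μ) / m.factorial) = (∫ ω, asc (Y ω) 0 ∂μ) / 1 := by
      simp [PowerSeries.constantCoeff_mk]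
    rw [this]
    simp only [asc_nil, div_one]
    rw [integral_const, probReal_univ]
    simp
  have hvan : ∀ m k : ℕ, m < k → PowerSeries.coeff m (G ^ k) = 0 :=
    fun m k h => coeff_pow_eq_zero_of_lt hG0 h
  -- probabilistic Lah numbers as power series coefficients
  have hLah : ∀ N k : ℕ, probLah μ Ys N k
      = (N.factorial : ℝ) / k.factorial * PowerSeries.coeff N (G ^ k) := by
    intro N k
    rw [probLah, hGdef, coeff_sub_one_pow, Finset.mul_sum, Finset.mul_sum]
    refine Finset.sum_congr rfl fun l hl => ?_
    rw [(hkey l N).2]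
    rw [div_mul_eq_mul_div, mul_comm]
    field_simp
    ring
  -- Lah-Bell polynomials with an extended summation range
  have hBell : ∀ (N : ℕ) (z : ℝ), N ≤ n → probLahBell μ Ys N z
      = ∑ i ∈ range (n+1), (N.factorial : ℝ) / i.factorial
          * PowerSeries.coeff N (G ^ i) * z ^ i := by
    intro N z hN
    rw [probLahBell]
    rw [Finset.sum_subset (by
      intro i hi
      simp only [Finset.mem_range] at hi ⊢
      omega : range (N+1) ⊆ range (n+1)) (by
      intro i hi hni
      simp only [Finset.mem_range] at hi hni
      rw [hLah, hvan N i (by omega)]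
      ring)]
    exact Finset.sum_congr rfl fun i _ => by rw [hLah]
  -- the convolution identity for the inner sum
  have hconv : ∀ i j : ℕ, (∑ k ∈ range (n+1), (n.choose k : ℝ) * k.factorial
        * (n-k).factorial * (PowerSeries.coeff k (G ^ i)
          * PowerSeries.coeff (n-k) (G ^ j)))
      = (n.factorial : ℝ) * PowerSeries.coeff n (G ^ (i+j)) := by
    intro i j
    rw [pow_add, PowerSeries.coeff_mul]
    rw [Finset.Nat.sum_antidiagonal_eq_sum_range_succ
      (f := fun a b => PowerSeries.coeff a (G ^ i) * PowerSeries.coeff b (G ^ j))]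
    rw [Finset.mul_sum]
    refine Finset.sum_congr rfl fun k hk => ?_
    have hk' : k ≤ n := by simpa [Nat.lt_succ_iff] using hk
    have : (n.choose k : ℝ) * k.factorial * (n-k).factorial = n.factorial := by
      rw [← Nat.cast_mul, ← Nat.cast_mul, ← Nat.choose_mul_factorial_mul_factorial hk']
    rw [← this]
  -- Left-hand side
  have hLHS : probLahBell μ Ys n (x + y)
      = (n.factorial : ℝ) * ∑ i ∈ range (n+1), ∑ j ∈ range (n+1),
          x^i / i.factorial * (y^j / j.factorial) * PowerSeries.coeff n (G ^ (i+j)) := by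
    rw [hBell n (x+y) le_rfl, ← key_sum n (fun m => PowerSeries.coeff n (G ^ m))
      (fun k hk => hvan n k hk) x y, Finset.mul_sum]
    refine Finset.sum_congr rfl fun m hm => ?_
    ring
  rw [hLHS]
  -- Right-hand side
  have hRHS : ∀ k ∈ range (n+1), (n.choose k : ℝ) * probLahBell μ Ys k x
        * probLahBell μ Ys (n-k) y
      = ∑ i ∈ range (n+1), ∑ j ∈ range (n+1), (n.choose k : ℝ)
          * ((k.factorial : ℝ) / i.factorial * PowerSeries.coeff k (G ^ i) * x ^ i)
          * (((n-k).factorial : ℝ) / j.factorial * PowerSeries.coeff (n-k) (G ^ j) * y ^ j) := by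
    intro k hk
    have hk' : k ≤ n := by simpa [Nat.lt_succ_iff] using hk
    rw [hBell k x hk', hBell (n-k) y (by omega), mul_assoc, Finset.sum_mul_sum, Finset.mul_sum]
    refine Finset.sum_congr rfl fun i _ => ?_
    rw [Finset.mul_sum]
    exact Finset.sum_congr rfl fun j _ => by ring
  have hswap : (∑ k ∈ range (n+1), ∑ i ∈ range (n+1), ∑ j ∈ range (n+1),
        (n.choose k : ℝ) * ((k.factorial : ℝ) / i.factorial
            * PowerSeries.coeff k (G ^ i) * x ^ i)
          * (((n-k).factorial : ℝ) / j.factorial * PowerSeries.coeff (n-k) (G ^ j) * y ^ j))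
      = ∑ i ∈ range (n+1), ∑ j ∈ range (n+1), ∑ k ∈ range (n+1),
        (n.choose k : ℝ) * ((k.factorial : ℝ) / i.factorial
            * PowerSeries.coeff k (G ^ i) * x ^ i)
          * (((n-k).factorial : ℝ) / j.factorial * PowerSeries.coeff (n-k) (G ^ j) * y ^ j) := by
    rw [Finset.sum_comm]
    refine Finset.sum_congr rfl fun i _ => ?_
    rw [Finset.sum_comm]
  rw [Finset.sum_congr rfl hRHS, hswap, Finset.mul_sum]
  refine Finset.sum_congr rfl fun i _ => ?_
  rw [Finset.mul_sum]
  refine Finset.sum_congr rfl fun j _ => ?_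
  have e1 : ∑ k ∈ range (n+1), (n.choose k : ℝ) * ((k.factorial : ℝ) / i.factorial
          * PowerSeries.coeff k (G ^ i) * x ^ i)
        * (((n-k).factorial : ℝ) / j.factorial * PowerSeries.coeff (n-k) (G ^ j) * y ^ j)
      = x ^ i / i.factorial * (y ^ j / j.factorial) * ∑ k ∈ range (n+1),
          (n.choose k : ℝ) * k.factorial * (n-k).factorial
            * (PowerSeries.coeff k (G ^ i) * PowerSeries.coeff (n-k) (G ^ j)) := by
    rw [Finset.mul_sum]
    exact Finset.sum_congr rfl fun k _ => by ring
  rw [e1, hconv i j]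
  ring
end

section
/- Let $Y$ be a Poisson random variable with parameter $\alpha > 0$. Then for all integers $n, k \ge 0$, $E\big[\langle S_k\rangle_n\big] = B_n^L(\alpha k)$. -/
open MeasureTheory ProbabilityTheory Finset

/-- The unsigned Lah numbers: `L(n,k) = n!/k! · C(n-1,k-1)` for `1 ≤ k ≤ n`,
with `L(0,0) = 1` and `L(n,0) = 0` for `n ≥ 1`. -/
noncomputable def Lah (n k : ℕ) : ℝ :=
  if k = 0 then (if n = 0 then 1 else 0)
  else if k ≤ n then (n.factorial : ℝ) / (k.factorial : ℝ) * ((n - 1).choose (k - 1) : ℝ)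
  else 0

/-- The Lah-Bell polynomial `B_n^L(x) = ∑_{k=0}^n L(n,k) x^k`. -/
noncomputable def LahBell (n : ℕ) (x : ℝ) : ℝ :=
  ∑ k ∈ Finset.range (n + 1), Lah n k * x ^ k

/-- real Poisson pmf -/
noncomputable def pm (lam : ℝ) (i : ℕ) : ℝ := Real.exp (-lam) * lam ^ i / i.factorial

lemma pm_nonneg {lam : ℝ} (h : 0 ≤ lam) (i : ℕ) : 0 ≤ pm lam i := by
  unfold pm; positivity

lemma pm_hasSum {lam : ℝ} (h : 0 ≤ lam) : HasSum (pm lam) 1 := by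
  have := ProbabilityTheory.poissonPMFRealSum lam.toNNReal
  have he : (fun n => ProbabilityTheory.poissonPMFReal lam.toNNReal n) = pm lam := by
    funext i
    simp [ProbabilityTheory.poissonPMFReal, pm, Real.coe_toNNReal lam h]
  rw [← he]; exact this


lemma pm_conv (a b : ℝ) (i : ℕ) :
    ∑ l ∈ range (i + 1), pm a (i - l) * pm b l = pm (a + b) i := by
  unfold pm
  rw [neg_add, Real.exp_add, add_pow, Finset.mul_sum, Finset.sum_div,
    ← Finset.sum_range_reflect]
  apply Finset.sum_congr rfl
  intro l hl
  have hli : l ≤ i := by simp at hl; omega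
  have h1 : i + 1 - 1 - l = i - l := by omega
  have h2 : i - (i - l) = l := by omega
  rw [h1, h2]
  have h3 : (Nat.choose i l : ℝ) * l.factorial * (i - l).factorial = i.factorial := by
    exact_mod_cast congrArg (Nat.cast : ℕ → ℝ) (Nat.choose_mul_factorial_mul_factorial hli)
  have hfl : (l.factorial : ℝ) ≠ 0 := Nat.cast_ne_zero.mpr (Nat.factorial_ne_zero l)
  have hfil : ((i - l).factorial : ℝ) ≠ 0 := Nat.cast_ne_zero.mpr (Nat.factorial_ne_zero _)
  have hfi : (i.factorial : ℝ) ≠ 0 := Nat.cast_ne_zero.mpr (Nat.factorial_ne_zero i)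
  field_simp
  ring_nf
  rw [← h3]
  ring


lemma Lah_succ (n j : ℕ) :
    Lah (n + 1) (j + 1) = Lah n j + ((n : ℝ) + j + 1) * Lah n (j + 1) := by
  have hfac : ∀ m : ℕ, (m.factorial : ℝ) ≠ 0 :=
    fun m => Nat.cast_ne_zero.mpr (Nat.factorial_ne_zero m)
  rcases Nat.eq_zero_or_pos j with rfl | hj
  · -- j = 0
    have h1 : Lah (n + 1) 1 = ((n+1).factorial : ℝ) := by
      unfold Lah
      rw [if_neg one_ne_zero, if_pos (by omega)]
      simp [Nat.factorial]
    rcases Nat.eq_zero_or_pos n with rfl | hn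
    · have h2 : Lah 0 0 = 1 := by unfold Lah; simp
      have h3 : Lah 0 1 = 0 := by unfold Lah; simp
      rw [h1, h2, h3]; simp [Nat.factorial]
    · have h2 : Lah n 0 = 0 := by unfold Lah; rw [if_pos rfl, if_neg (by omega)]
      have h3 : Lah n 1 = (n.factorial : ℝ) := by
        unfold Lah
        rw [if_neg one_ne_zero, if_pos (by omega)]
        simp [Nat.factorial]
      rw [h1, h2, h3, Nat.factorial_succ]
      push_cast
      ring
  rcases lt_or_ge n j with hnj | hjn
  · -- j > n : everything zero
    have h1 : Lah (n+1) (j+1) = 0 := by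
      unfold Lah; rw [if_neg (by omega), if_neg (by omega)]
    have h2 : Lah n j = 0 := by
      unfold Lah; rw [if_neg (by omega), if_neg (by omega)]
    have h3 : Lah n (j+1) = 0 := by
      unfold Lah; rw [if_neg (by omega), if_neg (by omega)]
    rw [h1, h2, h3]; ring
  rcases eq_or_lt_of_le hjn with rfl | hlt
  · -- j = n ≥ 1
    have h1 : Lah (j+1) (j+1) = 1 := by
      unfold Lah; rw [if_neg (by omega), if_pos le_rfl]
      simp [div_self (hfac (j+1)), Nat.add_sub_cancel]
    have h2 : Lah j j = 1 := by
      unfold Lah; rw [if_neg (by omega), if_pos le_rfl]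
      rw [Nat.choose_self, div_self (hfac j)]
      simp
    have h3 : Lah j (j+1) = 0 := by
      unfold Lah; rw [if_neg (by omega), if_neg (by omega)]
    rw [h1, h2, h3]; ring
  · -- 1 ≤ j < n, so j + 1 ≤ n
    obtain ⟨m, rfl⟩ : ∃ m, n = j + 1 + m := ⟨n - j - 1, by omega⟩
    unfold Lah
    rw [if_neg (by omega), if_pos (by omega), if_neg (by omega), if_pos (by omega),
      if_neg (by omega), if_pos (by omega)]
    have e1 : j + 1 + m - 1 = j + m := by omega
    have e2 : j + 1 - 1 = j := by omega
    have e3 : j + 1 + m + 1 - 1 = j + m + 1 := by omega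
    rw [e1, e2, e3]
    have hj1 : j - 1 + 1 = j := by omega
    have pas : ((j + m + 1).choose j : ℝ) = ((j+m).choose (j-1) : ℝ) + ((j+m).choose j : ℝ) := by
      have : (j + m + 1).choose j = (j+m).choose (j-1) + (j+m).choose j := by
        conv_lhs => rw [show j = (j-1)+1 by omega]
        rw [Nat.choose_succ_succ]
        congr 2 <;> omega
      exact_mod_cast congrArg (Nat.cast : ℕ → ℝ) this
    have key : ((j+m).choose j : ℝ) * j = ((j+m).choose (j-1) : ℝ) * ((m:ℝ)+1) := by
      have h := Nat.choose_succ_right_eq (j+m) (j-1)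
      rw [hj1] at h
      have h4 : j + m - (j - 1) = m + 1 := by omega
      rw [h4] at h
      exact_mod_cast congrArg (Nat.cast : ℕ → ℝ) h
    have f1 : ((j + 1 + m + 1).factorial : ℝ) = ((j:ℝ) + m + 2) * ((j+1+m).factorial : ℝ) := by
      rw [show j + 1 + m + 1 = (j + 1 + m) + 1 by omega, Nat.factorial_succ]
      push_cast; ring
    have f3 : ((j + 1).factorial : ℝ) = ((j:ℝ) + 1) * (j.factorial : ℝ) := by
      rw [Nat.factorial_succ]; push_cast; ring
    rw [pas, f1, f3]
    have hjpos : (0:ℝ) < (j:ℝ) + 1 := by positivity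
    field_simp
    push_cast
    linear_combination (-1:ℝ) * key


lemma Lah_zero_right (n : ℕ) : Lah n 0 = if n = 0 then 1 else 0 := by
  unfold Lah; rw [if_pos rfl]


lemma Lah_zero_of_gt {n j : ℕ} (h : n < j) : Lah n j = 0 := by
  unfold Lah; rw [if_neg (by omega), if_neg (by omega)]


lemma desc_id (i j : ℕ) :
    (i : ℝ) * (i.descFactorial j : ℝ) =
      (i.descFactorial (j+1) : ℝ) + (j : ℝ) * (i.descFactorial j : ℝ) := by
  rcases le_or_gt j i with h | h
  · rw [Nat.descFactorial_succ]
    have : ((i - j : ℕ) : ℝ) = (i : ℝ) - j := by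
      push_cast [h]; ring
    push_cast
    rw [this]
    ring
  · rw [Nat.descFactorial_eq_zero_iff_lt.mpr h,
      Nat.descFactorial_eq_zero_iff_lt.mpr (by omega)]
    simp


lemma asc_nat_eq (n i : ℕ) :
    asc (i : ℝ) n = ∑ j ∈ range (n + 1), Lah n j * (i.descFactorial j : ℝ) := by
  induction n with
  | zero => simp [asc, Lah]
  | succ n ih =>
    have step : asc (i:ℝ) (n+1) = asc (i:ℝ) n * ((i:ℝ) + n) := rfl
    rw [step, ih, Finset.sum_mul]
    have expand : ∀ j, Lah n j * (i.descFactorial j : ℝ) * ((i:ℝ) + n) =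
        Lah n j * (i.descFactorial (j+1) : ℝ) + ((n:ℝ) + j) * (Lah n j * (i.descFactorial j : ℝ)) := by
      intro j
      linear_combination Lah n j * desc_id i j
    rw [Finset.sum_congr rfl (fun j _ => expand j), Finset.sum_add_distrib]
    -- first sum: ∑_{j=0}^{n} Lah n j * d_{j+1} ; second: ∑_{j=0}^n (n+j) Lah n j d_j
    -- RHS: ∑_{j=0}^{n+1} Lah (n+1) j d_j = Lah(n+1)0 d_0 + ∑_{j=0}^n Lah(n+1)(j+1) d_{j+1}
    rw [Finset.sum_range_succ' (fun j => Lah (n+1) j * (i.descFactorial j : ℝ)) (n+1)]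
    rw [Lah_zero_right (n+1), if_neg (Nat.succ_ne_zero n)]
    have rhs : ∀ j, Lah (n+1) (j+1) * (i.descFactorial (j+1) : ℝ) =
        Lah n j * (i.descFactorial (j+1) : ℝ) +
          ((n:ℝ) + j + 1) * Lah n (j+1) * (i.descFactorial (j+1) : ℝ) := by
      intro j; rw [Lah_succ]; ring
    rw [Finset.sum_congr rfl (fun j _ => rhs j), Finset.sum_add_distrib]
    simp only [zero_mul, add_zero]
    congr 1
    -- remains: ∑_{j=0}^n (n+j) Lah n j d_j = ∑_{j=0}^n (n+j+1) Lah n (j+1) d_{j+1}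
    rw [Finset.sum_range_succ' (fun j => ((n:ℝ) + j) * (Lah n j * (i.descFactorial j : ℝ))) n]
    have hzero : ((n:ℝ) + (0:ℕ)) * (Lah n 0 * (i.descFactorial 0 : ℝ)) = 0 := by
      rcases Nat.eq_zero_or_pos n with rfl | hn
      · simp
      · rw [Lah_zero_right, if_neg (by omega)]; simp
    rw [hzero, add_zero, Finset.sum_range_succ, Lah_zero_of_gt (by omega), mul_zero, zero_mul,
      add_zero]
    apply Finset.sum_congr rfl
    intro j hj
    push_cast
    ring


lemma desc_series {lam : ℝ} (h : 0 ≤ lam) (j : ℕ) :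
    HasSum (fun i => (i.descFactorial j : ℝ) * pm lam i) (lam ^ j) := by
  have key : ∀ m : ℕ, ((m + j).descFactorial j : ℝ) * pm lam (m + j) = lam ^ j * pm lam m := by
    intro m
    have hd : (m + j).descFactorial j * m.factorial = (m + j).factorial := by
      have := Nat.factorial_mul_descFactorial (Nat.le_add_left j m)
      have e : m + j - j = m := by omega
      rw [e] at this
      rw [mul_comm]; exact this
    unfold pm
    have hfm : (m.factorial : ℝ) ≠ 0 := Nat.cast_ne_zero.mpr (Nat.factorial_ne_zero _)
    have hfmj : ((m+j).factorial : ℝ) ≠ 0 := Nat.cast_ne_zero.mpr (Nat.factorial_ne_zero _)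
    have hdR : ((m + j).descFactorial j : ℝ) * (m.factorial : ℝ) = ((m + j).factorial : ℝ) := by
      exact_mod_cast congrArg (Nat.cast : ℕ → ℝ) hd
    field_simp
    rw [pow_add]
    linear_combination (lam ^ m * lam ^ j) * hdR
  have h2 : HasSum (fun m => (( (m + j).descFactorial j : ℝ)) * pm lam (m + j)) (lam ^ j) := by
    have := (pm_hasSum h).mul_left (lam ^ j)
    simpa [key] using this
  have h3 := (hasSum_nat_add_iff
    (f := fun i => ((i.descFactorial j : ℝ)) * pm lam i) j).mp h2
  have hz : ∑ i ∈ range j, ((i.descFactorial j : ℝ)) * pm lam i = 0 := by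
    apply Finset.sum_eq_zero
    intro i hi
    rw [Nat.descFactorial_eq_zero_iff_lt.mpr (Finset.mem_range.mp hi)]
    simp
  rwa [hz, add_zero] at h3


lemma asc_series {lam : ℝ} (h : 0 ≤ lam) (n : ℕ) :
    HasSum (fun i : ℕ => asc (i : ℝ) n * pm lam i) (LahBell n lam) := by
  have : ∀ i : ℕ, asc (i : ℝ) n * pm lam i
      = ∑ j ∈ range (n + 1), Lah n j * ((i.descFactorial j : ℝ) * pm lam i) := by
    intro i
    rw [asc_nat_eq, Finset.sum_mul]
    exact Finset.sum_congr rfl fun j _ => by ring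
  simp only [this]
  exact hasSum_sum fun j _ => ((desc_series h j).mul_left (Lah n j))


lemma asc_nonneg {x : ℝ} (hx : 0 ≤ x) (n : ℕ) : 0 ≤ asc x n := by
  induction n with
  | zero => norm_num [asc]
  | succ n ih =>
    have : asc x (n+1) = asc x n * (x + n) := rfl
    rw [this]
    have : (0:ℝ) ≤ x + n := by positivity
    exact mul_nonneg ih this

lemma asc_measurable (n : ℕ) : Measurable (fun x : ℝ => asc x n) := by
  induction n with
  | zero =>
    have : (fun x : ℝ => asc x 0) = fun _ => (1:ℝ) := rfl
    rw [this]; exact measurable_const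
  | succ n ih =>
    have : (fun x : ℝ => asc x (n+1)) = fun x => asc x n * (x + n) := rfl
    rw [this]
    exact ih.mul (measurable_id.add_const _)


lemma integral_of_discrete {Ω : Type*} [MeasurableSpace Ω] (μ : Measure Ω)
    [IsProbabilityMeasure μ]
    (X : Ω → ℝ) (hX : Measurable X) (p : ℕ → ℝ) (hp : ∀ i, 0 ≤ p i)
    (hlaw : ∀ i : ℕ, μ (X ⁻¹' {(i : ℝ)}) = ENNReal.ofReal (p i)) (hpsum : HasSum p 1)
    (g : ℝ → ℝ) (hg : Measurable g) (hgn : ∀ i : ℕ, 0 ≤ g i) (c : ℝ)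
    (hgs : HasSum (fun i : ℕ => g i * p i) c) :
    ∫ ω, g (X ω) ∂μ = c := by
  set s : ℕ → Set Ω := fun i => X ⁻¹' {(i : ℝ)} with hs
  have hm : ∀ i, MeasurableSet (s i) := fun i => hX (measurableSet_singleton _)
  have hd : Pairwise (Function.onFun Disjoint s) := by
    intro i j hij
    simp only [Function.onFun, hs, Set.disjoint_left]
    intro ω h1 h2
    simp only [Set.mem_preimage, Set.mem_singleton_iff] at h1 h2
    exact hij (Nat.cast_injective (h1.symm.trans h2))
  have hU : μ (⋃ i, s i) = 1 := by
    rw [measure_iUnion hd hm]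
    have : ∀ i, μ (s i) = ENNReal.ofReal (p i) := hlaw
    simp only [this]
    rw [← ENNReal.ofReal_tsum_of_nonneg hp hpsum.summable, hpsum.tsum_eq, ENNReal.ofReal_one]
  have hae : ∀ᵐ x ∂μ, x ∈ ⋃ i, s i := by
    rw [ae_iff]
    have he : {a | ¬ a ∈ ⋃ i, s i} = (⋃ i, s i)ᶜ := rfl
    rw [he, measure_compl (MeasurableSet.iUnion hm) (measure_ne_top μ _), hU]
    simp
  have hrestrict : μ.restrict (⋃ i, s i) = μ := Measure.restrict_eq_self_of_ae_mem hae
  have hfm : Measurable fun ω => g (X ω) := hg.comp hX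
  have hconst : ∀ i : ℕ, ∀ x ∈ s i, g (X x) = g i := by
    intro i x hx
    simp only [hs, Set.mem_preimage, Set.mem_singleton_iff] at hx
    rw [hx]
  have hInt : Integrable (fun ω => g (X ω)) μ := by
    refine ⟨hfm.aestronglyMeasurable, ?_⟩
    rw [HasFiniteIntegral, ← hrestrict, lintegral_iUnion hm hd]
    have heach : ∀ i : ℕ, ∫⁻ x in s i, ‖g (X x)‖ₑ ∂μ = ENNReal.ofReal (g i * p i) := by
      intro i
      rw [setLIntegral_congr_fun (hm i) (f := fun x => ‖g (X x)‖ₑ) (g := fun _ => ‖g (i:ℝ)‖ₑ)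
        (fun x hx => by simp only [hconst i x hx])]
      rw [setLIntegral_const, hlaw i, Real.enorm_eq_ofReal (hgn i),
        ← ENNReal.ofReal_mul (hgn i)]
    simp only [heach]
    rw [← ENNReal.ofReal_tsum_of_nonneg (fun i => mul_nonneg (hgn i) (hp i)) hgs.summable]
    exact ENNReal.ofReal_lt_top
  have heach : ∀ i : ℕ, ∫ x in s i, g (X x) ∂μ = g i * p i := by
    intro i
    rw [setIntegral_congr_fun (hm i) (hconst i), setIntegral_const, Measure.real, hlaw i,
      ENNReal.toReal_ofReal (hp i), smul_eq_mul, mul_comm]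
  calc ∫ ω, g (X ω) ∂μ = ∫ x in ⋃ i, s i, g (X x) ∂μ := by rw [hrestrict]
    _ = ∑' i, ∫ x in s i, g (X x) ∂μ :=
        integral_iUnion hm hd (by rwa [IntegrableOn, hrestrict])
    _ = ∑' i : ℕ, g i * p i := by simp only [heach]
    _ = c := hgs.tsum_eq


lemma nat_full {Ω : Type*} [MeasurableSpace Ω] (μ : Measure Ω) [IsProbabilityMeasure μ]
    (X : Ω → ℝ) (hX : Measurable X) (p : ℕ → ℝ) (hp : ∀ i, 0 ≤ p i)
    (hlaw : ∀ i : ℕ, μ (X ⁻¹' {(i : ℝ)}) = ENNReal.ofReal (p i)) (hpsum : HasSum p 1) :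
    μ (⋃ i : ℕ, X ⁻¹' {(i : ℝ)}) = 1 := by
  have hm : ∀ i : ℕ, MeasurableSet (X ⁻¹' {(i : ℝ)}) := fun i => hX (measurableSet_singleton _)
  have hd : Pairwise (Function.onFun Disjoint (fun i : ℕ => X ⁻¹' {(i : ℝ)})) := by
    intro i j hij
    simp only [Function.onFun, Set.disjoint_left]
    intro ω h1 h2
    simp only [Set.mem_preimage, Set.mem_singleton_iff] at h1 h2
    exact hij (Nat.cast_injective (h1.symm.trans h2))
  rw [measure_iUnion hd hm]
  simp only [hlaw]
  rw [← ENNReal.ofReal_tsum_of_nonneg hp hpsum.summable, hpsum.tsum_eq, ENNReal.ofReal_one]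


lemma law_sum {Ω : Type*} [MeasurableSpace Ω] (μ : Measure Ω) [IsProbabilityMeasure μ]
    (Ys : ℕ → Ω → ℝ) (hYs : ∀ j, Measurable (Ys j))
    (hindep : iIndepFun Ys μ)
    (α : ℝ) (hα : 0 ≤ α)
    (hl : ∀ j, ∀ i : ℕ, μ (Ys j ⁻¹' {(i : ℝ)}) = ENNReal.ofReal (pm α i)) :
    ∀ k, ∀ i : ℕ, μ ((fun ω => ∑ j ∈ range k, Ys j ω) ⁻¹' {(i : ℝ)})
      = ENNReal.ofReal (pm ((k : ℝ) * α) i) := by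
  intro k
  induction k with
  | zero =>
    intro i
    simp only [range_zero, sum_empty]
    rcases Nat.eq_zero_or_pos i with rfl | hi
    · have : (fun _ : Ω => (0:ℝ)) ⁻¹' {((0:ℕ) : ℝ)} = Set.univ := by
        ext ω; simp
      rw [this]
      simp [pm]
    · obtain ⟨i', rfl⟩ : ∃ i', i = i' + 1 := ⟨i - 1, by omega⟩
      have : (fun _ : Ω => (0:ℝ)) ⁻¹' {((i' + 1 : ℕ) : ℝ)} = (∅ : Set Ω) := by
        ext ω
        simp only [Set.mem_preimage, Set.mem_singleton_iff, Set.mem_empty_iff_false, iff_false]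
        push_cast
        intro h
        nlinarith [Nat.cast_nonneg (α := ℝ) i']
      rw [this]
      simp [pm]
  | succ k ih =>
    intro i
    set S : Ω → ℝ := fun ω => ∑ j ∈ range k, Ys j ω with hS
    have hSm : Measurable S := by
      apply Finset.measurable_sum
      exact fun j _ => hYs j
    have hmS : ∀ m : ℕ, MeasurableSet (S ⁻¹' {(m : ℝ)}) :=
      fun m => hSm (measurableSet_singleton _)
    have hmY : ∀ m : ℕ, MeasurableSet (Ys k ⁻¹' {(m : ℝ)}) :=
      fun m => hYs k (measurableSet_singleton _)
    have hkα : (0:ℝ) ≤ (k:ℝ) * α := by positivity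
    have hUS : μ (⋃ m : ℕ, S ⁻¹' {(m : ℝ)}) = 1 :=
      nat_full μ S hSm _ (fun m => pm_nonneg hkα m) ih (pm_hasSum hkα)
    have hUY : μ (⋃ m : ℕ, Ys k ⁻¹' {(m : ℝ)}) = 1 :=
      nat_full μ (Ys k) (hYs k) _ (fun m => pm_nonneg hα m) (hl k) (pm_hasSum hα)
    have hindep' : IndepFun S (Ys k) μ := by
      have := hindep.indepFun_sum_range_succ hYs k
      rwa [show (∑ j ∈ range k, Ys j) = S by rw [hS]; ext ω; simp [Finset.sum_apply]] at this
    -- the full-measure set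
    set T : Set Ω := (⋃ m : ℕ, S ⁻¹' {(m : ℝ)}) ∩ (⋃ m : ℕ, Ys k ⁻¹' {(m : ℝ)}) with hT
    have hTfull : μ Tᶜ = 0 := by
      rw [hT, Set.compl_inter]
      refine le_antisymm (le_trans (measure_union_le _ _) ?_) zero_le
      rw [show ((⋃ m : ℕ, S ⁻¹' {(m : ℝ)})ᶜ : Set Ω) = _ from rfl]
      have h1 : μ (⋃ m : ℕ, S ⁻¹' {(m : ℝ)})ᶜ = 0 := by
        rw [measure_compl (MeasurableSet.iUnion hmS) (measure_ne_top μ _), hUS]; simp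
      have h2 : μ (⋃ m : ℕ, Ys k ⁻¹' {(m : ℝ)})ᶜ = 0 := by
        rw [measure_compl (MeasurableSet.iUnion hmY) (measure_ne_top μ _), hUY]; simp
      rw [h1, h2]; simp
    have hsplit : ∀ ω, ∑ j ∈ range (k+1), Ys j ω = S ω + Ys k ω := by
      intro ω; rw [Finset.sum_range_succ]
    -- event decomposition
    have hsets : ((fun ω => ∑ j ∈ range (k+1), Ys j ω) ⁻¹' {(i : ℝ)}) ∩ T
        = ⋃ l ∈ range (i+1), (S ⁻¹' {((i - l : ℕ) : ℝ)} ∩ Ys k ⁻¹' {(l : ℝ)}) := by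
      ext ω
      simp only [Set.mem_inter_iff, Set.mem_preimage, Set.mem_singleton_iff, Set.mem_iUnion,
        hT, Set.mem_iUnion, mem_range, hsplit]
      constructor
      · rintro ⟨hsum, ⟨⟨m, hm⟩, ⟨l, hlm⟩⟩⟩
        refine ⟨l, ?_, ?_, hlm⟩
        · have : ((m + l : ℕ) : ℝ) = (i : ℝ) := by push_cast; rw [← hm, ← hlm]; exact hsum
          have := @Nat.cast_injective ℝ _ _ _ _ this
          omega
        · have : ((m + l : ℕ) : ℝ) = (i : ℝ) := by push_cast; rw [← hm, ← hlm]; exact hsum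
          have hml := @Nat.cast_injective ℝ _ _ _ _ this
          rw [hm]
          congr 1
          omega
      · rintro ⟨l, hli, hSw, hYw⟩
        refine ⟨?_, ⟨⟨i - l, hSw⟩, ⟨l, hYw⟩⟩⟩
        rw [hSw, hYw]
        have : i - l + l = i := by omega

        exact_mod_cast congrArg (Nat.cast : ℕ → ℝ) this
      -- adjust
    have hmain : μ ((fun ω => ∑ j ∈ range (k+1), Ys j ω) ⁻¹' {(i : ℝ)})
        = μ (⋃ l ∈ range (i+1), (S ⁻¹' {((i - l : ℕ) : ℝ)} ∩ Ys k ⁻¹' {(l : ℝ)})) := by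
      rw [← hsets, measure_inter_conull hTfull]
    rw [hmain, measure_biUnion_finset ?disj
      (fun l _ => (hmS (i - l)).inter (hmY l))]
    case disj =>
      intro l1 h1 l2 h2 hne
      simp only [Function.onFun, Set.disjoint_left]
      intro ω hw1 hw2
      simp only [Set.mem_inter_iff, Set.mem_preimage, Set.mem_singleton_iff] at hw1 hw2
      exact hne (Nat.cast_injective (hw1.2.symm.trans hw2.2))
    have heach : ∀ l ∈ range (i+1),
        μ (S ⁻¹' {((i - l : ℕ) : ℝ)} ∩ Ys k ⁻¹' {(l : ℝ)})
          = ENNReal.ofReal (pm ((k:ℝ) * α) (i - l) * pm α l) := by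
      intro l _
      rw [hindep'.measure_inter_preimage_eq_mul _ _ (measurableSet_singleton _)
        (measurableSet_singleton _), ih (i - l), hl k l,
        ← ENNReal.ofReal_mul (pm_nonneg hkα _)]
    rw [Finset.sum_congr rfl heach,
      ← ENNReal.ofReal_sum_of_nonneg
        (fun l _ => mul_nonneg (pm_nonneg hkα _) (pm_nonneg hα _)),
      pm_conv]
    congr 1
    push_cast
    ring_nf


theorem statement_12 {Ω : Type*} [MeasurableSpace Ω] (μ : Measure Ω) [IsProbabilityMeasure μ]
    (Y : Ω → ℝ) (Ys : ℕ → Ω → ℝ)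
    (hY : Measurable Y) (hYs : ∀ j, Measurable (Ys j))
    (hid : ∀ j, IdentDistrib (Ys j) Y μ μ)
    (hindep : iIndepFun Ys μ)
    (α : ℝ) (hα : 0 < α)
    (hpois : ∀ i : ℕ, μ {ω | Y ω = (i : ℝ)} =
      ENNReal.ofReal (Real.exp (-α) * α ^ i / i.factorial))
    (n k : ℕ) :
    ∫ ω, asc (∑ j ∈ Finset.range k, Ys j ω) n ∂μ = LahBell n (α * k) := by
  have hα' : (0:ℝ) ≤ α := le_of_lt hα
  have hl : ∀ j, ∀ i : ℕ, μ (Ys j ⁻¹' {(i : ℝ)}) = ENNReal.ofReal (pm α i) := by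
    intro j i
    rw [(hid j).measure_mem_eq (measurableSet_singleton _)]
    have : Y ⁻¹' {(i:ℝ)} = {ω | Y ω = (i : ℝ)} := rfl
    rw [this, hpois i]
    rfl
  have hlaw := law_sum μ Ys hYs hindep α hα' hl k
  have hkα : (0:ℝ) ≤ (k:ℝ) * α := by positivity
  have hSm : Measurable (fun ω => ∑ j ∈ Finset.range k, Ys j ω) :=
    Finset.measurable_sum _ (fun j _ => hYs j)
  have := integral_of_discrete μ (fun ω => ∑ j ∈ Finset.range k, Ys j ω) hSm
    (pm ((k:ℝ) * α)) (fun i => pm_nonneg hkα i) hlaw (pm_hasSum hkα)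
    (fun x => asc x n) (asc_measurable n)
    (fun i => asc_nonneg (Nat.cast_nonneg i) n)
    (LahBell n ((k:ℝ) * α)) (asc_series hkα n)
  rw [this, mul_comm]
end
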